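/- If a formula φ is E′-valid, then there exist atoms p₁, …, pₙ occurring in φ such that the formula ((¬¬p₁ → p₁) ∧ … ∧ (¬¬pₙ → pₙ)) → φ is intuitionistically valid. -/

import Mathlib

/- Formalization of Lorenzen dialogue games, following Felscher's presentation.

   Propositional formulas are built from atoms using ¬, ∧, ∨, →.  A dialogue
   for a formula φ is a sequence of moves beginning with Proponent (P)
   asserting φ at position 0, with O moving at odd positions and P at even
   positions.  Each later move attacks or defends an earlier move of the other
   player, according to the particle rules.  Structural rules (D10, D11, D12,
   D13, E, and the variants D10*, D10′) constrain dialogues further.  P wins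
   if P made the last move and no moves are available to O; φ is S-valid if P
   has an S-winning strategy for φ. -/

namespace LorenzenDialogues

/-- Propositional formulas: atoms, ¬, ∧, ∨, →. -/
inductive Formula : Type
  | atom : ℕ → Formula
  | neg  : Formula → Formula
  | and  : Formula → Formula → Formula
  | or   : Formula → Formula → Formula
  | imp  : Formula → Formula → Formula
deriving DecidableEq

/-- Statements: formulas together with the symbolic attacks `?`, `∧_L`, `∧_R`. -/
inductive Statement : Type
  | form  : Formula → Statement
  | qmark : Statement
  | andL  : Statement
  | andR  : Statement
deriving DecidableEq

/-- Particle rules, attack part: which statements attack which formulas. -/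
inductive Attacks : Statement → Formula → Prop
  | andL (a b : Formula) : Attacks .andL (.and a b)
  | andR (a b : Formula) : Attacks .andR (.and a b)
  | qmark (a b : Formula) : Attacks .qmark (.or a b)
  | imp (a b : Formula) : Attacks (.form a) (.imp a b)
  | neg (a : Formula) : Attacks (.form a) (.neg a)

/-- Particle rules, defense part: `Defends χ a s` means `s` is a permitted
    defense of the formula `χ` against the attack `a`.  (A negation admits
    no defense.) -/
inductive Defends : Formula → Statement → Statement → Prop
  | andL (a b : Formula) : Defends (.and a b) .andL (.form a)
  | andR (a b : Formula) : Defends (.and a b) .andR (.form b)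
  | orL (a b : Formula) : Defends (.or a b) .qmark (.form a)
  | orR (a b : Formula) : Defends (.or a b) .qmark (.form b)
  | imp (a b : Formula) : Defends (.imp a b) (.form a) (.form b)

/-- A move: a statement, a flag recording whether it is an attack (`true`)
    or a defense (`false`), and the position of the earlier move it attacks,
    resp. the earlier attack it defends against. -/
structure Move : Type where
  statement : Statement
  isAttack : Bool
  ref : ℕ
deriving DecidableEq

/-- A dialogue: the initial formula asserted by P at position 0, followed by
    the list of later moves (the move at list index `i` occupies position
    `i + 1`; O moves at odd positions, P at even positions). -/
structure Dialogue : Type where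
  initial : Formula
  moves : List Move

/-- The statement asserted at position `n` (if any). -/
def Dialogue.stmtAt (d : Dialogue) (n : ℕ) : Option Statement :=
  if n = 0 then some (.form d.initial) else (d.moves[n - 1]?).map Move.statement

/-- The move at position `n ≥ 1` (if any); position 0 is the initial assertion,
    not a move. -/
def Dialogue.moveAt (d : Dialogue) (n : ℕ) : Option Move :=
  if n = 0 then none else d.moves[n - 1]?

/-- The move `m`, played at position `n ≥ 1`, is permitted by the particle
    rules: it refers to an earlier position of the other player; if it is an
    attack, it attacks a formula asserted there, and if it is a defense, it
    responds to an attack played there, as the particle rules prescribe. -/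
def MoveOK (d : Dialogue) (n : ℕ) (m : Move) : Prop :=
  m.ref < n ∧ m.ref % 2 ≠ n % 2 ∧
    (m.isAttack = true →
      ∃ ψ, d.stmtAt m.ref = some (.form ψ) ∧ Attacks m.statement ψ) ∧
    (m.isAttack = false →
      ∃ a χ, d.moveAt m.ref = some a ∧ a.isAttack = true ∧
        d.stmtAt a.ref = some (.form χ) ∧ Defends χ a.statement m.statement)

/-- The dialogue adheres to the particle rules (every move is legal). -/
def ParticleOK (d : Dialogue) : Prop :=
  ∀ i m, d.moves[i]? = some m → MoveOK d (i + 1) m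

/-- Position `n` carries a defense of the attack made at position `r`. -/
def IsDefenseOf (d : Dialogue) (n r : ℕ) : Prop :=
  ∃ m, d.moveAt n = some m ∧ m.isAttack = false ∧ m.ref = r

/-- Position `n` carries an attack on the assertion made at position `r`. -/
def IsAttackOn (d : Dialogue) (n r : ℕ) : Prop :=
  ∃ m, d.moveAt n = some m ∧ m.isAttack = true ∧ m.ref = r

/-- Position `n` carries an attack. -/
def IsAttackPos (d : Dialogue) (n : ℕ) : Prop :=
  ∃ m, d.moveAt n = some m ∧ m.isAttack = true

/-- The attack at position `r` is still open (no defense against it has yet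
    been played) before position `k`. -/
def OpenAt (d : Dialogue) (r k : ℕ) : Prop :=
  IsAttackPos d r ∧ ¬ ∃ j, j < k ∧ IsDefenseOf d j r

/-- (D10) P may assert an atomic formula only after it has been asserted by O
    before. -/
def D10 (d : Dialogue) : Prop :=
  ∀ n p, n % 2 = 0 → d.stmtAt n = some (.form (.atom p)) →
    ∃ j, j < n ∧ j % 2 = 1 ∧ d.stmtAt j = some (.form (.atom p))

/-- (D10*) P may assert an atom `p` only if O has asserted `p` or `¬p`
    before. -/
def D10star (d : Dialogue) : Prop :=
  ∀ n p, n % 2 = 0 → d.stmtAt n = some (.form (.atom p)) →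
    ∃ j, j < n ∧ j % 2 = 1 ∧
      (d.stmtAt j = some (.form (.atom p)) ∨
        d.stmtAt j = some (.form (.neg (.atom p))))

/-- (D10′) P may assert an atom `p` only if O has asserted `p` or `¬¬p`
    before. -/
def D10prime (d : Dialogue) : Prop :=
  ∀ n p, n % 2 = 0 → d.stmtAt n = some (.form (.atom p)) →
    ∃ j, j < n ∧ j % 2 = 1 ∧
      (d.stmtAt j = some (.form (.atom p)) ∨
        d.stmtAt j = some (.form (.neg (.neg (.atom p)))))

/-- (D11) When defending, only the most recent open attack may be responded
    to: the attack defended against is open, and no strictly more recent open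
    attack (against the same player) exists. -/
def D11 (d : Dialogue) : Prop :=
  ∀ n r, IsDefenseOf d n r →
    OpenAt d r n ∧ ¬ ∃ r', r < r' ∧ r' < n ∧ r' % 2 = r % 2 ∧ OpenAt d r' n

/-- (D12) An attack may be answered at most once. -/
def D12 (d : Dialogue) : Prop :=
  ∀ n₁ n₂ r, IsDefenseOf d n₁ r → IsDefenseOf d n₂ r → n₁ = n₂

/-- (D13) A P-assertion (made at an even position) may be attacked at most
    once. -/
def D13 (d : Dialogue) : Prop :=
  ∀ n₁ n₂ r, r % 2 = 0 → IsAttackOn d n₁ r → IsAttackOn d n₂ r → n₁ = n₂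

/-- (E) O can react only upon the immediately preceding P-statement. -/
def ERule (d : Dialogue) : Prop :=
  ∀ n m, n % 2 = 1 → d.moveAt n = some m → m.ref = n - 1

/-- A ruleset is a set of structural rules, i.e. a predicate on dialogues. -/
def Ruleset := Dialogue → Prop

/-- Ruleset D = {D10, D11, D12, D13}. -/
def rulesetD : Ruleset := fun d => D10 d ∧ D11 d ∧ D12 d ∧ D13 d

/-- Ruleset E = D ∪ {E}. -/
def rulesetE : Ruleset := fun d => rulesetD d ∧ ERule d

/-- Ruleset CL = E − {D11, D12} = {D10, D13, E}. -/
def rulesetCL : Ruleset := fun d => D10 d ∧ D13 d ∧ ERule d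

/-- Ruleset N = D − {D11, D12} = {D10, D13}. -/
def rulesetN : Ruleset := fun d => D10 d ∧ D13 d

/-- Ruleset E* = {D10*, D11, D12, D13, E}. -/
def rulesetEstar : Ruleset :=
  fun d => D10star d ∧ D11 d ∧ D12 d ∧ D13 d ∧ ERule d

/-- Ruleset E′ = {D10′, D11, D12, D13, E}. -/
def rulesetEprime : Ruleset :=
  fun d => D10prime d ∧ D11 d ∧ D12 d ∧ D13 d ∧ ERule d

/-- An S-dialogue: a dialogue adhering to the particle rules and to the
    structural rules S. -/
def Legal (S : Ruleset) (d : Dialogue) : Prop := ParticleOK d ∧ S d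

/-- Extend a dialogue by one move. -/
def Dialogue.extend (d : Dialogue) (m : Move) : Dialogue :=
  ⟨d.initial, d.moves ++ [m]⟩

/-- The position about to be played. -/
def nextPos (d : Dialogue) : ℕ := d.moves.length + 1

/-- It is P's turn (the next position is even). -/
def PTurn (d : Dialogue) : Prop := nextPos d % 2 = 0

/-- The move `m` legally extends the S-dialogue `d`. -/
def LegalExt (S : Ruleset) (d : Dialogue) (m : Move) : Prop :=
  Legal S (d.extend m)

/-- `PWinningC S C d` holds when P, moving under the additional constraint
    `C` on P's own choices, has a winning strategy in the S-dialogue game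
    continuing the dialogue `d`: at P's turn, P has a legal move (satisfying
    `C`) after which P is still winning; at O's turn, every legal O-move
    leads to a position where P is winning (in particular, if no O-move is
    available, P has won: P made the last move and O cannot move). -/
inductive PWinningC (S : Ruleset) (C : Dialogue → Move → Prop) : Dialogue → Prop
  | pMove (d : Dialogue) (m : Move) (hturn : PTurn d)
      (hm : LegalExt S d m) (hC : C d m)
      (h : PWinningC S C (d.extend m)) : PWinningC S C d
  | oMoves (d : Dialogue) (hturn : ¬ PTurn d)
      (h : ∀ m, LegalExt S d m → PWinningC S C (d.extend m)) :
      PWinningC S C d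

/-- P has a winning strategy continuing the S-dialogue `d`. -/
def PWinning (S : Ruleset) (d : Dialogue) : Prop :=
  PWinningC S (fun _ _ => True) d

/-- `valid S φ` (written `⊨_S φ`): the opening assertion of φ is itself a
    legal S-dialogue and P has an S-winning strategy for φ. -/
def valid (S : Ruleset) (φ : Formula) : Prop :=
  Legal S ⟨φ, []⟩ ∧ PWinning S ⟨φ, []⟩

/-- Derivability in intuitionistic propositional logic (a Hilbert-style
    axiomatization with modus ponens). -/
inductive IProv : Formula → Prop
  | k (a b : Formula) : IProv (.imp a (.imp b a))
  | s (a b c : Formula) :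
      IProv (.imp (.imp a (.imp b c)) (.imp (.imp a b) (.imp a c)))
  | andE1 (a b : Formula) : IProv (.imp (.and a b) a)
  | andE2 (a b : Formula) : IProv (.imp (.and a b) b)
  | andI (a b : Formula) : IProv (.imp a (.imp b (.and a b)))
  | orI1 (a b : Formula) : IProv (.imp a (.or a b))
  | orI2 (a b : Formula) : IProv (.imp b (.or a b))
  | orE (a b c : Formula) :
      IProv (.imp (.imp a c) (.imp (.imp b c) (.imp (.or a b) c)))
  | negI (a b : Formula) :
      IProv (.imp (.imp a b) (.imp (.imp a (.neg b)) (.neg a)))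
  | negE (a b : Formula) : IProv (.imp (.neg a) (.imp a b))
  | mp (a b : Formula) : IProv (.imp a b) → IProv a → IProv b

/-- The stability principle ¬¬p → p for the atom `p`. -/
def stab (p : ℕ) : Formula := .imp (.neg (.neg (.atom p))) (.atom p)

/-- Stable logic: intuitionistic propositional logic plus all instances of
    the stability scheme ¬¬p → p for atoms p, closed under modus ponens. -/
inductive StableProv : Formula → Prop
  | intuit (a : Formula) : IProv a → StableProv a
  | stab (p : ℕ) : StableProv (stab p)
  | mp (a b : Formula) : StableProv (.imp a b) → StableProv a → StableProv b

/-- Boolean evaluation of a formula under a valuation of its atoms. -/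
def Formula.eval (v : ℕ → Bool) : Formula → Bool
  | .atom p => v p
  | .neg a => !(a.eval v)
  | .and a b => a.eval v && b.eval v
  | .or a b => a.eval v || b.eval v
  | .imp a b => !(a.eval v) || b.eval v

/-- A classical tautology: true under every Boolean valuation. -/
def Tautology (φ : Formula) : Prop := ∀ v, φ.eval v = true

/-- Uniform substitution of formulas for atoms, applied homomorphically. -/
def Formula.subst (σ : ℕ → Formula) : Formula → Formula
  | .atom p => σ p
  | .neg a => .neg (a.subst σ)
  | .and a b => .and (a.subst σ) (b.subst σ)
  | .or a b => .or (a.subst σ) (b.subst σ)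
  | .imp a b => .imp (a.subst σ) (b.subst σ)

/-- The atoms occurring in a formula. -/
def Formula.atoms : Formula → List ℕ
  | .atom p => [p]
  | .neg a => a.atoms
  | .and a b => a.atoms ++ b.atoms
  | .or a b => a.atoms ++ b.atoms
  | .imp a b => a.atoms ++ b.atoms

/-- Conjunction of a nonempty list of formulas. -/
def conjList (f : Formula) : List Formula → Formula
  | [] => f
  | g :: gs => .and f (conjList g gs)

/-- The conjunction (¬¬p → p) ∧ … of stability instances for the atoms
    `p :: ps`. -/
def stabConj (p : ℕ) (ps : List ℕ) : Formula :=
  conjList (stab p) (ps.map stab)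

/-! ### Hilbert-system toolkit -/

def ctx (Γ : List Formula) (c : Formula) : Formula := Γ.foldr .imp c

@[simp] lemma ctx_nil (c : Formula) : ctx [] c = c := rfl
@[simp] lemma ctx_cons (x : Formula) (Γ : List Formula) (c : Formula) :
    ctx (x :: Γ) c = .imp x (ctx Γ c) := rfl

lemma ctx_append (Γ₁ Γ₂ : List Formula) (c : Formula) :
    ctx (Γ₁ ++ Γ₂) c = ctx Γ₁ (ctx Γ₂ c) := by
  simp [ctx, List.foldr_append]

lemma iprov_imp_refl (a : Formula) : IProv (.imp a a) :=
  IProv.mp _ _ (IProv.mp _ _ (IProv.s a (.imp a a) a) (IProv.k a (.imp a a)))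
    (IProv.k a a)

lemma iprov_weak {c : Formula} (h : IProv c) (a : Formula) : IProv (.imp a c) :=
  IProv.mp _ _ (IProv.k c a) h

lemma iprov_comp {a b c : Formula} (h1 : IProv (.imp a b))
    (h2 : IProv (.imp b c)) : IProv (.imp a c) :=
  IProv.mp _ _ (IProv.mp _ _ (IProv.s a b c) (iprov_weak h2 a)) h1

lemma iprov_lift {x p q : Formula} (h : IProv (.imp p q)) :
    IProv (.imp (.imp x p) (.imp x q)) :=
  IProv.mp _ _ (IProv.s x p q) (iprov_weak h x)

lemma iprov_lift2 {x p q r : Formula} (h : IProv (.imp p (.imp q r))) :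
    IProv (.imp (.imp x p) (.imp (.imp x q) (.imp x r))) :=
  iprov_comp (iprov_lift h) (IProv.s x q r)

lemma ctx_mp_int (Γ : List Formula) (a b : Formula) :
    IProv (.imp (ctx Γ (.imp a b)) (.imp (ctx Γ a) (ctx Γ b))) := by
  induction Γ with
  | nil => exact iprov_imp_refl _
  | cons x Γ ih => exact iprov_lift2 ih

lemma ctx_mp {Γ : List Formula} {a b : Formula}
    (h1 : IProv (ctx Γ (.imp a b))) (h2 : IProv (ctx Γ a)) :
    IProv (ctx Γ b) :=
  IProv.mp _ _ (IProv.mp _ _ (ctx_mp_int Γ a b) h1) h2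

lemma ctx_of {c : Formula} (h : IProv c) (Γ : List Formula) :
    IProv (ctx Γ c) := by
  induction Γ with
  | nil => exact h
  | cons x Γ ih => exact iprov_weak ih x

lemma ctx_const (t : Formula) (Γ : List Formula) :
    IProv (.imp t (ctx Γ t)) := by
  induction Γ with
  | nil => exact iprov_imp_refl t
  | cons x Γ ih => exact iprov_comp ih (IProv.k (ctx Γ t) x)

lemma ctx_hyp {a : Formula} {Γ : List Formula} (h : a ∈ Γ) :
    IProv (ctx Γ a) := by
  induction Γ with
  | nil => cases h
  | cons x Γ ih =>
    rcases List.mem_cons.1 h with rfl | h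
    · exact ctx_const a Γ
    · exact iprov_weak (ih h) x

lemma ctx_collapse : ∀ (Γ : List Formula) {Δ : List Formula} {c : Formula},
    (∀ g ∈ Γ, g ∈ Δ) → IProv (ctx Δ (ctx Γ c)) → IProv (ctx Δ c) := by
  intro Γ
  induction Γ with
  | nil => intro Δ c _ h; exact h
  | cons x Γ ih =>
    intro Δ c hsub h
    exact ih (fun g hg => hsub g (List.mem_cons_of_mem _ hg))
      (ctx_mp h (ctx_hyp (hsub x (List.mem_cons_self))))

lemma ctx_mono {Γ Δ : List Formula} {c : Formula}
    (hsub : ∀ g ∈ Γ, g ∈ Δ) (h : IProv (ctx Γ c)) : IProv (ctx Δ c) :=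
  ctx_collapse Γ hsub (ctx_of h Δ)

/-! ### Provability from a set of hypotheses -/

def SProv (T : Set Formula) (c : Formula) : Prop :=
  ∃ Γ : List Formula, (∀ g ∈ Γ, g ∈ T) ∧ IProv (ctx Γ c)

lemma sprov_of {c : Formula} (h : IProv c) (T : Set Formula) : SProv T c :=
  ⟨[], by simp, h⟩

lemma sprov_hyp {c : Formula} {T : Set Formula} (h : c ∈ T) : SProv T c :=
  ⟨[c], by simpa using h, ctx_hyp (by simp)⟩

lemma sprov_mono {T T' : Set Formula} (hT : T ⊆ T') {c : Formula}
    (h : SProv T c) : SProv T' c := by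
  rcases h with ⟨Γ, hΓ, hp⟩
  exact ⟨Γ, fun g hg => hT (hΓ g hg), hp⟩

lemma sprov_mp {T : Set Formula} {a b : Formula}
    (h1 : SProv T (.imp a b)) (h2 : SProv T a) : SProv T b := by
  rcases h1 with ⟨Γ₁, hΓ₁, hp₁⟩
  rcases h2 with ⟨Γ₂, hΓ₂, hp₂⟩
  refine ⟨Γ₁ ++ Γ₂, ?_, ?_⟩
  · intro g hg
    rcases List.mem_append.1 hg with h | h
    · exact hΓ₁ g h
    · exact hΓ₂ g h
  · exact ctx_mp (ctx_mono (fun g hg => List.mem_append.2 (Or.inl hg)) hp₁)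
      (ctx_mono (fun g hg => List.mem_append.2 (Or.inr hg)) hp₂)

lemma sprov_deduction {T : Set Formula} {a b : Formula}
    (h : SProv (insert a T) b) : SProv T (.imp a b) := by
  classical
  rcases h with ⟨Γ, hΓ, hp⟩
  refine ⟨Γ.filter (fun g => g ≠ a), ?_, ?_⟩
  · intro g hg
    have := List.mem_filter.1 hg
    rcases hΓ g this.1 with h | h
    · exact absurd (by simpa using this.2) (by simp [h] : ¬ (g ≠ a))
    · exact h
  · have hsub : ∀ g ∈ Γ, g ∈ Γ.filter (fun g => g ≠ a) ++ [a] := by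
      intro g hg
      by_cases hga : g = a
      · subst hga; simp
      · exact List.mem_append.2 (Or.inl (List.mem_filter.2 ⟨hg, by simpa using hga⟩))
    have := ctx_mono hsub hp
    rwa [ctx_append] at this

lemma sprov_cut {T : Set Formula} {a b : Formula}
    (h1 : SProv T a) (h2 : SProv (insert a T) b) : SProv T b :=
  sprov_mp (sprov_deduction h2) h1
/-! ### Kripke models -/

structure Model : Type 1 where
  W : Type
  le : W → W → Prop
  refl : ∀ w, le w w
  trans : ∀ {a b c}, le a b → le b c → le a c
  val : W → ℕ → Prop
  mono : ∀ {a b p}, le a b → val a p → val b p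

def Model.force (M : Model) : M.W → Formula → Prop
  | w, .atom p => M.val w p
  | w, .neg a => ∀ w', M.le w w' → ¬ M.force w' a
  | w, .and a b => M.force w a ∧ M.force w b
  | w, .or a b => M.force w a ∨ M.force w b
  | w, .imp a b => ∀ w', M.le w w' → M.force w' a → M.force w' b

lemma Model.force_mono (M : Model) {w w' : M.W} (h : M.le w w') :
    ∀ {c : Formula}, M.force w c → M.force w' c := by
  intro c
  induction c generalizing w w' with
  | atom p => exact fun hf => M.mono h hf
  | neg a ih => exact fun hf w'' h'' => hf w'' (M.trans h h'')
  | and a b iha ihb => exact fun hf => ⟨iha h hf.1, ihb h hf.2⟩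
  | or a b iha ihb => exact fun hf => hf.elim (fun x => Or.inl (iha h x)) (fun x => Or.inr (ihb h x))
  | imp a b iha ihb => exact fun hf w'' h'' ha => hf w'' (M.trans h h'') ha

/-- Stability of the atoms in `S` in the model `M`. -/
def StableOn (S : ℕ → Prop) (M : Model) : Prop :=
  ∀ w p, S p → M.force w (.neg (.neg (.atom p))) → M.force w (.atom p)

/-! ### The canonical model for IL + stability on `S` -/

section Canonical
variable (S : ℕ → Prop)

def BaseTh : Set Formula := { f | ∃ p, S p ∧ f = stab p }

def IsWorld (T : Set Formula) : Prop :=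
  (∀ x, SProv T x → x ∈ T) ∧
  (∀ a b, Formula.or a b ∈ T → a ∈ T ∨ b ∈ T) ∧
  (∃ c, c ∉ T) ∧ BaseTh S ⊆ T

lemma lindenbaum {T : Set Formula} {c : Formula}
    (hB : BaseTh S ⊆ T) (h : ¬ SProv T c) :
    ∃ U, IsWorld S U ∧ T ⊆ U ∧ c ∉ U := by
  classical
  have hzorn := zorn_subset_nonempty {U : Set Formula | ¬ SProv U c} ?_ T h
  · rcases hzorn with ⟨U, hTU, hU⟩
    have hUc : ¬ SProv U c := hU.prop
    have hmax : ∀ V, ¬ SProv V c → U ⊆ V → V = U := fun V h1 h2 => hU.eq_of_ge h1 h2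
    have hclosed : ∀ x, SProv U x → x ∈ U := by
      intro x hx
      by_contra hxU
      have : ¬ SProv (insert x U) c := fun hc => hUc (sprov_cut hx hc)
      have := hmax _ this (Set.subset_insert x U)
      exact hxU (this ▸ Set.mem_insert x U)
    refine ⟨U, ⟨hclosed, ?_, ⟨c, fun hc => hUc (sprov_hyp hc)⟩, hB.trans hTU⟩, hTU, fun hc => hUc (sprov_hyp hc)⟩
    · intro a b hab
      by_contra hcon
      push_neg at hcon
      have ha : SProv (insert a U) c := by
        by_contra h'
        have := hmax _ h' (Set.subset_insert a U)
        exact hcon.1 (this ▸ Set.mem_insert a U)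
      have hb : SProv (insert b U) c := by
        by_contra h'
        have := hmax _ h' (Set.subset_insert b U)
        exact hcon.2 (this ▸ Set.mem_insert b U)
      have h1 : SProv U (.imp a c) := sprov_deduction ha
      have h2 : SProv U (.imp b c) := sprov_deduction hb
      exact hUc (sprov_mp (sprov_mp (sprov_mp (sprov_of (IProv.orE a b c) U) h1) h2)
        (sprov_hyp hab))
  · intro ch hch hchain ⟨T₀, hT₀⟩
    refine ⟨⋃₀ ch, ?_, fun s hs => Set.subset_sUnion_of_mem hs⟩
    intro hc
    rcases hc with ⟨Γ, hΓ, hp⟩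
    -- find a single element of the chain containing all of Γ
    have : ∃ V ∈ ch, ∀ g ∈ Γ, g ∈ V := by
      clear hp
      induction Γ with
      | nil => exact ⟨T₀, hT₀, by simp⟩
      | cons x Γ ih =>
        rcases ih (fun g hg => hΓ g (List.mem_cons_of_mem _ hg)) with ⟨V, hV, hVg⟩
        rcases hΓ x (List.mem_cons_self) with ⟨Vx, hVx, hxVx⟩
        rcases eq_or_ne V Vx with rfl | hne
        · exact ⟨V, hV, by
            intro g hg
            rcases List.mem_cons.1 hg with rfl | hg
            · exact hxVx
            · exact hVg g hg⟩
        · rcases hchain hV hVx hne with h | h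
          · exact ⟨Vx, hVx, by
              intro g hg
              rcases List.mem_cons.1 hg with rfl | hg
              · exact hxVx
              · exact h (hVg g hg)⟩
          · exact ⟨V, hV, by
              intro g hg
              rcases List.mem_cons.1 hg with rfl | hg
              · exact h hxVx
              · exact hVg g hg⟩
    rcases this with ⟨V, hVch, hΓV⟩
    exact hch hVch ⟨Γ, hΓV, hp⟩

def CanW : Type := {T : Set Formula // IsWorld S T}

def canModel : Model where
  W := CanW S
  le := fun T U => T.1 ⊆ U.1
  refl := fun T => subset_rfl
  trans := fun h1 h2 => h1.trans h2
  val := fun T p => Formula.atom p ∈ T.1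
  mono := fun h hp => h hp
lemma world_sprov {T : Set Formula} (hT : IsWorld S T) {x : Formula} :
    SProv T x ↔ x ∈ T :=
  ⟨hT.1 x, sprov_hyp⟩

/-- The truth lemma for the canonical model. -/
lemma truth_lemma : ∀ (c : Formula) (T : CanW S),
    (canModel S).force T c ↔ c ∈ T.1 := by
  intro c
  induction c with
  | atom p => intro T; exact Iff.rfl
  | neg a ih =>
    intro T
    constructor
    · intro hf
      by_contra hmem
      have hnp : ¬ SProv T.1 (.neg a) := fun h => hmem (T.2.1 _ h)
      -- T ∪ {a} does not prove ¬a
      have hna : ¬ SProv (insert a T.1) (.neg a) := by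
        intro h
        have h1 : SProv T.1 (.imp a (.neg a)) := sprov_deduction h
        have h2 : SProv T.1 (.imp a a) := sprov_of (iprov_imp_refl a) _
        exact hnp (sprov_mp (sprov_mp (sprov_of (IProv.negI a a) _) h2) h1)
      have hB : BaseTh S ⊆ insert a T.1 := fun f hf => Set.mem_insert_of_mem _ (T.2.2.2.2 hf)
      rcases lindenbaum S hB hna with ⟨U, hU, hTU, hcU⟩
      have haU : a ∈ U := hTU (Set.mem_insert a T.1)
      exact hf ⟨U, hU⟩ (fun x hx => hTU (Set.mem_insert_of_mem _ hx)) ((ih ⟨U, hU⟩).2 haU)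
    · intro hmem U hle hfa
      have haU : a ∈ U.1 := (ih U).1 hfa
      have hna : Formula.neg a ∈ U.1 := hle hmem
      rcases U.2.2.2.1 with ⟨c, hc⟩
      exact hc (U.2.1 _ (sprov_mp (sprov_mp (sprov_of (IProv.negE a c) _)
        (sprov_hyp hna)) (sprov_hyp haU)))
  | and a b iha ihb =>
    intro T
    constructor
    · rintro ⟨hfa, hfb⟩
      exact T.2.1 _ (sprov_mp (sprov_mp (sprov_of (IProv.andI a b) _)
        (sprov_hyp ((iha T).1 hfa))) (sprov_hyp ((ihb T).1 hfb)))
    · intro hmem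
      refine ⟨(iha T).2 ?_, (ihb T).2 ?_⟩
      · exact T.2.1 _ (sprov_mp (sprov_of (IProv.andE1 a b) _) (sprov_hyp hmem))
      · exact T.2.1 _ (sprov_mp (sprov_of (IProv.andE2 a b) _) (sprov_hyp hmem))
  | or a b iha ihb =>
    intro T
    constructor
    · rintro (hf | hf)
      · exact T.2.1 _ (sprov_mp (sprov_of (IProv.orI1 a b) _) (sprov_hyp ((iha T).1 hf)))
      · exact T.2.1 _ (sprov_mp (sprov_of (IProv.orI2 a b) _) (sprov_hyp ((ihb T).1 hf)))
    · intro hmem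
      rcases T.2.2.1 a b hmem with h | h
      · exact Or.inl ((iha T).2 h)
      · exact Or.inr ((ihb T).2 h)
  | imp a b iha ihb =>
    intro T
    constructor
    · intro hf
      by_contra hmem
      have hnp : ¬ SProv (insert a T.1) b := by
        intro h
        exact hmem (T.2.1 _ (sprov_deduction h))
      have hB : BaseTh S ⊆ insert a T.1 := fun f hf => Set.mem_insert_of_mem _ (T.2.2.2.2 hf)
      rcases lindenbaum S hB hnp with ⟨U, hU, hTU, hbU⟩
      have haU : a ∈ U := hTU (Set.mem_insert a T.1)
      have := hf ⟨U, hU⟩ (fun x hx => hTU (Set.mem_insert_of_mem _ hx)) ((iha ⟨U, hU⟩).2 haU)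
      exact hbU ((ihb ⟨U, hU⟩).1 this)
    · intro hmem U hle hfa
      exact (ihb U).2 (U.2.1 _ (sprov_mp (sprov_hyp (hle hmem)) (sprov_hyp ((iha U).1 hfa))))

lemma canModel_stable : StableOn S (canModel S) := by
  intro T p hp hf
  have : Formula.neg (.neg (.atom p)) ∈ T.1 := (truth_lemma S _ T).1 hf
  have hstab : stab p ∈ T.1 := T.2.2.2.2 ⟨p, hp, rfl⟩
  exact (truth_lemma S _ T).2 (T.2.1 _ (sprov_mp (sprov_hyp hstab) (sprov_hyp this)))

/-- Completeness: semantic validity over models stable on `S` implies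
provability from the stability instances of atoms in `S`. -/
lemma completeness {φ : Formula}
    (h : ∀ M : Model, StableOn S M → ∀ w, M.force w φ) :
    SProv (BaseTh S) φ := by
  by_contra hnp
  rcases lindenbaum S (subset_rfl) hnp with ⟨U, hU, hTU, hcU⟩
  exact hcU ((truth_lemma S φ ⟨U, hU⟩).1 (h (canModel S) (canModel_stable S) ⟨U, hU⟩))

end Canonical
/-! ### From `SProv` over stability instances to the final implication -/

lemma atoms_nonempty : ∀ φ : Formula, ∃ p, p ∈ φ.atoms := by
  intro φ
  induction φ with
  | atom p => exact ⟨p, by simp [Formula.atoms]⟩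
  | neg a ih => simpa [Formula.atoms] using ih
  | and a b iha ihb => rcases iha with ⟨p, hp⟩; exact ⟨p, by simp [Formula.atoms, hp]⟩
  | or a b iha ihb => rcases iha with ⟨p, hp⟩; exact ⟨p, by simp [Formula.atoms, hp]⟩
  | imp a b iha ihb => rcases iha with ⟨p, hp⟩; exact ⟨p, by simp [Formula.atoms, hp]⟩

lemma conj_curry_int : ∀ (gs : List Formula) (f c : Formula),
    IProv (.imp (ctx (f :: gs) c) (.imp (conjList f gs) c)) := by
  intro gs
  induction gs with
  | nil => intro f c; exact iprov_imp_refl _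
  | cons g gs ih =>
    intro f c
    -- goal : (f → ctx (g::gs) c) → (f ∧ conjList g gs → c)
    -- work in context [H, X] with H := ctx (f::g::gs) c, X := .and f (conjList g gs)
    have hIH : IProv (ctx [ctx (f :: g :: gs) c, Formula.and f (conjList g gs)]
        (.imp (ctx (g :: gs) c) (.imp (conjList g gs) c))) :=
      ctx_of (ih g c) _
    have hH : IProv (ctx [ctx (f :: g :: gs) c, Formula.and f (conjList g gs)]
        (ctx (f :: g :: gs) c)) := ctx_hyp (by simp)
    have hX : IProv (ctx [ctx (f :: g :: gs) c, Formula.and f (conjList g gs)]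
        (.and f (conjList g gs))) := ctx_hyp (by simp)
    have hf : IProv (ctx [ctx (f :: g :: gs) c, Formula.and f (conjList g gs)] f) :=
      ctx_mp (ctx_of (IProv.andE1 f (conjList g gs)) _) hX
    have hrest : IProv (ctx [ctx (f :: g :: gs) c, Formula.and f (conjList g gs)]
        (conjList g gs)) :=
      ctx_mp (ctx_of (IProv.andE2 f (conjList g gs)) _) hX
    have h1 : IProv (ctx [ctx (f :: g :: gs) c, Formula.and f (conjList g gs)]
        (ctx (g :: gs) c)) := ctx_mp hH hf
    have h2 := ctx_mp (ctx_mp hIH h1) hrest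
    exact h2

lemma list_of_stabs {S : ℕ → Prop} : ∀ Γ : List Formula, (∀ g ∈ Γ, g ∈ BaseTh S) →
    ∃ qs : List ℕ, Γ = qs.map stab ∧ ∀ q ∈ qs, S q := by
  intro Γ
  induction Γ with
  | nil => exact fun _ => ⟨[], rfl, by simp⟩
  | cons g Γ ih =>
    intro h
    rcases ih (fun x hx => h x (List.mem_cons_of_mem _ hx)) with ⟨qs, rfl, hqs⟩
    rcases h g (List.mem_cons_self) with ⟨p, hp, rfl⟩
    refine ⟨p :: qs, rfl, ?_⟩
    intro q hq
    rcases List.mem_cons.1 hq with rfl | hq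
    · exact hp
    · exact hqs q hq

lemma final_plumbing {φ : Formula}
    (h : ∀ M : Model, StableOn (· ∈ φ.atoms) M → ∀ w, M.force w φ) :
    ∃ (p : ℕ) (ps : List ℕ), (∀ q ∈ p :: ps, q ∈ φ.atoms) ∧
      IProv (.imp (stabConj p ps) φ) := by
  rcases completeness (· ∈ φ.atoms) h with ⟨Γ, hΓ, hp⟩
  rcases list_of_stabs Γ hΓ with ⟨qs, rfl, hqs⟩
  cases qs with
  | nil =>
    rcases atoms_nonempty φ with ⟨p, hpφ⟩
    exact ⟨p, [], by simpa using hpφ, iprov_weak (by simpa [ctx] using hp) _⟩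
  | cons q qs =>
    refine ⟨q, qs, ?_, ?_⟩
    · intro x hx
      rcases List.mem_cons.1 hx with rfl | hx
      · exact hqs x (List.mem_cons_self)
      · exact hqs x (List.mem_cons_of_mem _ hx)
    · have : IProv (.imp (conjList (stab q) (qs.map stab)) φ) :=
        IProv.mp _ _ (conj_curry_int (qs.map stab) (stab q) φ) (by simpa using hp)
      simpa [stabConj] using this
/-! ### Dialogue bookkeeping -/

@[simp] lemma stmtAt_zero (d : Dialogue) : d.stmtAt 0 = some (.form d.initial) := by
  simp [Dialogue.stmtAt]

lemma moveAt_some_bounds {d : Dialogue} {j : ℕ} {m : Move}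
    (h : d.moveAt j = some m) : 1 ≤ j ∧ j ≤ d.moves.length := by
  unfold Dialogue.moveAt at h
  by_cases hj : j = 0
  · simp [hj] at h
  · rw [if_neg hj] at h
    obtain ⟨h1, -⟩ := List.getElem?_eq_some_iff.1 h
    omega

lemma stmtAt_some_bound {d : Dialogue} {j : ℕ} {s : Statement}
    (h : d.stmtAt j = some s) : j ≤ d.moves.length := by
  unfold Dialogue.stmtAt at h
  by_cases hj : j = 0
  · omega
  · rw [if_neg hj] at h
    rcases Option.map_eq_some_iff.1 h with ⟨m, hm, _⟩
    obtain ⟨h1, -⟩ := List.getElem?_eq_some_iff.1 hm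
    omega

lemma stmtAt_of_moveAt {d : Dialogue} {j : ℕ} {m : Move}
    (h : d.moveAt j = some m) : d.stmtAt j = some m.statement := by
  unfold Dialogue.moveAt at h
  by_cases hj : j = 0
  · simp [hj] at h
  · rw [if_neg hj] at h
    unfold Dialogue.stmtAt
    rw [if_neg hj, h]
    rfl

lemma moveAt_of_stmtAt {d : Dialogue} {j : ℕ} {s : Statement} (hj : j ≠ 0)
    (h : d.stmtAt j = some s) : ∃ m, d.moveAt j = some m ∧ m.statement = s := by
  unfold Dialogue.stmtAt at h
  rw [if_neg hj] at h
  rcases Option.map_eq_some_iff.1 h with ⟨m, hm, hms⟩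
  exact ⟨m, by unfold Dialogue.moveAt; rw [if_neg hj]; exact hm, hms⟩

@[simp] lemma extend_length (d : Dialogue) (m : Move) :
    (d.extend m).moves.length = d.moves.length + 1 := by
  simp [Dialogue.extend]

@[simp] lemma extend_initial (d : Dialogue) (m : Move) :
    (d.extend m).initial = d.initial := rfl

lemma moveAt_extend_le {d : Dialogue} {m : Move} {j : ℕ}
    (h : j ≤ d.moves.length) : (d.extend m).moveAt j = d.moveAt j := by
  unfold Dialogue.moveAt Dialogue.extend
  by_cases hj : j = 0
  · simp [hj]
  · rw [if_neg hj, if_neg hj]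
    exact List.getElem?_append_left (by omega)

lemma moveAt_extend_last (d : Dialogue) (m : Move) :
    (d.extend m).moveAt (d.moves.length + 1) = some m := by
  unfold Dialogue.moveAt Dialogue.extend
  rw [if_neg (by omega)]
  simp

lemma stmtAt_extend_le {d : Dialogue} {m : Move} {j : ℕ}
    (h : j ≤ d.moves.length) : (d.extend m).stmtAt j = d.stmtAt j := by
  unfold Dialogue.stmtAt
  by_cases hj : j = 0
  · simp [hj]
  · rw [if_neg hj, if_neg hj]
    simp only [Dialogue.extend]
    rw [List.getElem?_append_left (by omega)]

lemma stmtAt_extend_last (d : Dialogue) (m : Move) :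
    (d.extend m).stmtAt (d.moves.length + 1) = some m.statement := by
  rw [stmtAt_of_moveAt (moveAt_extend_last d m)]

lemma moveAt_none {d : Dialogue} {j : ℕ} (h : d.moves.length < j) :
    d.moveAt j = none := by
  unfold Dialogue.moveAt
  rw [if_neg (by omega)]
  exact List.getElem?_eq_none (by omega)

lemma stmtAt_none {d : Dialogue} {j : ℕ} (h : d.moves.length < j) (hj : j ≠ 0) :
    d.stmtAt j = none := by
  unfold Dialogue.stmtAt
  rw [if_neg hj]
  rw [List.getElem?_eq_none (by omega)]
  rfl

lemma particle_moveAt {d : Dialogue} (hp : ParticleOK d) {j : ℕ} {m : Move}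
    (h : d.moveAt j = some m) : MoveOK d j m := by
  have hb := moveAt_some_bounds h
  unfold Dialogue.moveAt at h
  rw [if_neg (by omega)] at h
  have := hp (j - 1) m h
  have hj : j - 1 + 1 = j := by omega
  rwa [hj] at this

lemma ref_lt {d : Dialogue} (hp : ParticleOK d) {j : ℕ} {m : Move}
    (h : d.moveAt j = some m) : m.ref < j :=
  (particle_moveAt hp h).1

lemma isAttackPos_extend_le {d : Dialogue} {m : Move} {j : ℕ}
    (h : j ≤ d.moves.length) : IsAttackPos (d.extend m) j ↔ IsAttackPos d j := by
  unfold IsAttackPos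
  rw [moveAt_extend_le h]

lemma isAttackPos_bound {d : Dialogue} {j : ℕ} (h : IsAttackPos d j) :
    1 ≤ j ∧ j ≤ d.moves.length := by
  rcases h with ⟨m, hm, _⟩
  exact moveAt_some_bounds hm

lemma moveOK_extend {d : Dialogue} {m m' : Move} {j : ℕ} (hp : ParticleOK d)
    (hj : j ≤ d.moves.length + 1) (h : MoveOK d j m') : MoveOK (d.extend m) j m' := by
  obtain ⟨h1, h2, h3, h4⟩ := h
  refine ⟨h1, h2, ?_, ?_⟩
  · intro hatt
    rcases h3 hatt with ⟨ψ, hψ, ha⟩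
    exact ⟨ψ, by rwa [stmtAt_extend_le (by omega)], ha⟩
  · intro hdef
    rcases h4 hdef with ⟨a, χ, hma, haAtt, haχ, hd⟩
    have haref : a.ref < m'.ref := ref_lt hp hma
    refine ⟨a, χ, by rwa [moveAt_extend_le (by omega)], haAtt,
      by rwa [stmtAt_extend_le (by omega)], hd⟩

/-- Legality of an O-move extension: `d` is legal with an even number of
later moves (O to move), and the new move is particle-legal and refers to
the last position. -/
lemma legal_extend_O {d : Dialogue} {m : Move}
    (hleg : Legal rulesetEprime d) (hlen : d.moves.length % 2 = 0)
    (href : m.ref = d.moves.length)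
    (hmk : MoveOK d (d.moves.length + 1) m) :
    Legal rulesetEprime (d.extend m) := by
  obtain ⟨hpart, hD10, hD11, hD12, hD13, hE⟩ := hleg
  set N := d.moves.length with hN
  have hmk' : MoveOK (d.extend m) (N + 1) m := moveOK_extend hpart (by omega) hmk
  have hmove_cases : ∀ {j : ℕ} {mj : Move}, (d.extend m).moveAt j = some mj →
      (j ≤ N ∧ d.moveAt j = some mj) ∨ (j = N + 1 ∧ mj = m) := by
    intro j mj hj
    have hb := moveAt_some_bounds hj
    rw [extend_length] at hb
    by_cases hjN : j ≤ N
    · left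
      exact ⟨hjN, by rwa [moveAt_extend_le hjN] at hj⟩
    · right
      have hj1 : j = N + 1 := by omega
      subst hj1
      rw [moveAt_extend_last] at hj
      exact ⟨rfl, by injection hj.symm⟩
  have hrefs : ∀ {j : ℕ} {mj : Move}, d.moveAt j = some mj → mj.ref < j :=
    fun h => ref_lt hpart h
  constructor
  · -- ParticleOK
    intro i mi hi
    rcases Nat.lt_or_ge i N with hiN | hiN
    · have : d.moves[i]? = some mi := by
        have := hi
        simp only [Dialogue.extend] at this
        rwa [List.getElem?_append_left (by omega)] at this
      exact moveOK_extend hpart (by omega) (hpart i mi this)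
    · have hiN' : i = N := by
        obtain ⟨h1, -⟩ := List.getElem?_eq_some_iff.1 hi
        simp only [Dialogue.extend, List.length_append, List.length_cons, List.length_nil] at h1
        omega
      subst hiN'
      have : mi = m := by
        have := hi
        simp only [Dialogue.extend] at this
        rw [List.getElem?_concat_length] at this
        injection this.symm
      subst this
      exact hmk'
  refine ⟨?_, ?_, ?_, ?_, ?_⟩
  · -- D10prime
    intro n p hn hst
    have hb := stmtAt_some_bound hst
    rw [extend_length] at hb
    have hnN : n ≤ N := by
      rcases Nat.lt_or_ge n (N + 1) with h | h
      · omega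
      · exfalso; omega
    rw [stmtAt_extend_le hnN] at hst
    rcases hD10 n p hn hst with ⟨j, hj1, hj2, hj3⟩
    refine ⟨j, hj1, hj2, ?_⟩
    rw [stmtAt_extend_le (by omega)]
    exact hj3
  · -- D11
    intro n r hdef
    rcases hdef with ⟨mj, hmj, hmjAtt, hmjref⟩
    rcases hmove_cases hmj with ⟨hjN, hmj'⟩ | ⟨hjN, rfl⟩
    · -- an old defense
      have hold : IsDefenseOf d n r := ⟨mj, hmj', hmjAtt, hmjref⟩
      rcases hD11 n r hold with ⟨⟨hatk, hop⟩, hnew⟩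
      have hrn : r < n := by
        subst hmjref; exact hrefs hmj'
      constructor
      · constructor
        · rwa [isAttackPos_extend_le (by omega)]
        · intro ⟨j', hj', hdef'⟩
          rcases hdef' with ⟨mj', hmj'', hmj''Att, hmj''ref⟩
          rcases hmove_cases hmj'' with ⟨_, hh⟩ | ⟨hh, rfl⟩
          · exact hop ⟨j', hj', mj', hh, hmj''Att, hmj''ref⟩
          · omega
      · intro ⟨r', hr1, hr2, hr3, hr4⟩
        have hnN : n ≤ N := (moveAt_some_bounds hmj').2
        refine hnew ⟨r', hr1, hr2, hr3, ?_, ?_⟩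
        · rcases hr4.1 with ⟨m', hm', hm'Att⟩
          rcases hmove_cases hm' with ⟨_, hh⟩ | ⟨hh, hh2⟩
          · exact ⟨m', hh, hm'Att⟩
          · omega
        · intro ⟨j', hj', hdef'⟩
          rcases hdef' with ⟨mj', hmj'', hmj''Att, hmj''ref⟩
          exact hr4.2 ⟨j', hj', mj',
            by rw [moveAt_extend_le (by omega)]; exact hmj'', hmj''Att, hmj''ref⟩
    · -- the new move, as a defense of the attack at position N
      subst hmjref
      rcases hmk.2.2.2 hmjAtt with ⟨a, χ, hma, haAtt, _, _⟩
      rw [href] at hma ⊢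
      constructor
      · constructor
        · exact ⟨a, by rwa [moveAt_extend_le (by omega)], haAtt⟩
        · intro ⟨j', hj', hdef'⟩
          rcases hdef' with ⟨mj', hmj'', hmj''Att, hmj''ref⟩
          rcases hmove_cases hmj'' with ⟨hjN', hh⟩ | ⟨hh, rfl⟩
          · have := hrefs hh
            omega
          · omega
      · intro ⟨r', hr1, hr2, _, _⟩
        omega
  · -- D12
    intro n₁ n₂ r hd1 hd2
    have key : ∀ {n' : ℕ}, IsDefenseOf (d.extend m) n' r →
        (n' ≤ N ∧ IsDefenseOf d n' r) ∨ (n' = N + 1 ∧ m.isAttack = false ∧ m.ref = r) := by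
      intro n' ⟨mj, hmj, h1, h2⟩
      rcases hmove_cases hmj with ⟨hjN, hh⟩ | ⟨hh, rfl⟩
      · exact Or.inl ⟨hjN, mj, hh, h1, h2⟩
      · exact Or.inr ⟨hh, h1, h2⟩
    rcases key hd1 with ⟨h1N, h1⟩ | ⟨h1N, h1a, h1r⟩ <;>
      rcases key hd2 with ⟨h2N, h2⟩ | ⟨h2N, h2a, h2r⟩
    · exact hD12 n₁ n₂ r h1 h2
    · exfalso
      rcases h1 with ⟨mj, hmj, _, hmjref⟩
      have := hrefs hmj
      omega
    · exfalso
      rcases h2 with ⟨mj, hmj, _, hmjref⟩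
      have := hrefs hmj
      omega
    · omega
  · -- D13
    intro n₁ n₂ r hr hd1 hd2
    have key : ∀ {n' : ℕ}, IsAttackOn (d.extend m) n' r →
        (n' ≤ N ∧ IsAttackOn d n' r) ∨ (n' = N + 1 ∧ m.isAttack = true ∧ m.ref = r) := by
      intro n' ⟨mj, hmj, h1, h2⟩
      rcases hmove_cases hmj with ⟨hjN, hh⟩ | ⟨hh, rfl⟩
      · exact Or.inl ⟨hjN, mj, hh, h1, h2⟩
      · exact Or.inr ⟨hh, h1, h2⟩
    rcases key hd1 with ⟨h1N, h1⟩ | ⟨h1N, h1a, h1r⟩ <;>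
      rcases key hd2 with ⟨h2N, h2⟩ | ⟨h2N, h2a, h2r⟩
    · exact hD13 n₁ n₂ r hr h1 h2
    · exfalso
      rcases h1 with ⟨mj, hmj, _, hmjref⟩
      have := hrefs hmj
      omega
    · exfalso
      rcases h2 with ⟨mj, hmj, _, hmjref⟩
      have := hrefs hmj
      omega
    · omega
  · -- ERule
    intro n mj hn hmj
    rcases hmove_cases hmj with ⟨hjN, hh⟩ | ⟨hh, rfl⟩
    · exact hE n mj hn hh
    · subst hh
      omega
/-! ### The winning-strategy invariant -/

def SubS (S : ℕ → Prop) (d : Dialogue) : Prop :=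
  ∀ j c, d.stmtAt j = some (.form c) → ∀ q ∈ c.atoms, S q

def OTrue (M : Model) (d : Dialogue) (w : M.W) : Prop :=
  ∀ j c, j % 2 = 1 → d.stmtAt j = some (.form c) → M.force w c

def TopPack (M : Model) (d : Dialogue) (w : M.W) : Prop :=
  ∃ r, r % 2 = 1 ∧ IsAttackPos d r ∧
    (∀ r', r' % 2 = 1 → IsAttackPos d r' → r' ≤ r) ∧
    (∀ j mj, d.moveAt j = some mj → mj.isAttack = false → mj.ref ≠ r) ∧
    (∀ a χ e, d.moveAt r = some a → d.stmtAt a.ref = some (.form χ) →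
      Defends χ a.statement (.form e) → ¬ M.force w e)

def Inv (S : ℕ → Prop) (M : Model) (d : Dialogue) (w : M.W) : Prop :=
  Legal rulesetEprime d ∧ SubS S d ∧ OTrue M d w ∧
    ((d.moves.length % 2 = 1 ∧ TopPack M d w) ∨
     (d.moves.length % 2 = 0 ∧
        ∃ ψ, d.stmtAt d.moves.length = some (.form ψ) ∧ ¬ M.force w ψ) ∨
     (d.moves.length % 2 = 0 ∧
        (∃ mm, d.moveAt d.moves.length = some mm ∧ mm.isAttack = true) ∧
        TopPack M d w))

lemma attacks_form_atoms {e ψ : Formula} (h : Attacks (.form e) ψ) :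
    ∀ q ∈ e.atoms, q ∈ ψ.atoms := by
  cases h with
  | imp a b => intro q hq; simp [Formula.atoms]; exact Or.inl hq
  | neg a => intro q hq; simpa [Formula.atoms] using hq

lemma defends_form_atoms {s : Statement} {x e : Formula}
    (h : Defends x s (.form e)) : ∀ q ∈ e.atoms, q ∈ x.atoms := by
  cases h with
  | andL a b => intro q hq; simp [Formula.atoms]; exact Or.inl hq
  | andR a b => intro q hq; simp [Formula.atoms]; exact Or.inr hq
  | orL a b => intro q hq; simp [Formula.atoms]; exact Or.inl hq
  | orR a b => intro q hq; simp [Formula.atoms]; exact Or.inr hq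
  | imp a b => intro q hq; simp [Formula.atoms]; exact Or.inr hq

lemma defends_form {χ : Formula} {s t : Statement} (h : Defends χ s t) :
    ∃ e, t = .form e := by
  cases h <;> exact ⟨_, rfl⟩

lemma atom_force {S : ℕ → Prop} {M : Model} (hM : StableOn S M)
    {d : Dialogue} {w : M.W} {n p : ℕ}
    (hleg : Legal rulesetEprime d) (hsub : SubS S d) (hot : OTrue M d w)
    (hn : n % 2 = 0) (hst : d.stmtAt n = some (.form (.atom p))) :
    M.force w (.atom p) := by
  obtain ⟨j, hj1, hj2, hj3 | hj3⟩ := hleg.2.1 n p hn hst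
  · exact hot j _ hj2 hj3
  · have hS : S p := hsub j _ hj3 p (by simp [Formula.atoms])
    exact hM w p hS (hot j _ hj2 hj3)

lemma attack_choice {M : Model} {w : M.W} {ψ : Formula} (hψ : ∀ p, ψ ≠ .atom p)
    (hw : ¬ M.force w ψ) :
    ∃ w' s, M.le w w' ∧ Attacks s ψ ∧ (∀ e, s = .form e → M.force w' e) ∧
      (∀ e, Defends ψ s (.form e) → ¬ M.force w' e) := by
  classical
  cases ψ with
  | atom p => exact absurd rfl (hψ p)
  | neg a =>
    simp only [Model.force] at hw
    push_neg at hw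
    obtain ⟨w', hle, ha⟩ := hw
    refine ⟨w', .form a, hle, Attacks.neg a, ?_, ?_⟩
    · intro e he; cases he; exact ha
    · intro e hd; cases hd
  | and a b =>
    by_cases hA : M.force w a
    · refine ⟨w, .andR, M.refl w, Attacks.andR a b, ?_, ?_⟩
      · intro e he; cases he
      · intro e hd hfe
        cases hd
        exact hw ⟨hA, hfe⟩
    · refine ⟨w, .andL, M.refl w, Attacks.andL a b, ?_, ?_⟩
      · intro e he; cases he
      · intro e hd hfe
        cases hd
        exact hA hfe
  | or a b =>
    refine ⟨w, .qmark, M.refl w, Attacks.qmark a b, ?_, ?_⟩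
    · intro e he; cases he
    · intro e hd hfe
      cases hd
      · exact hw (Or.inl hfe)
      · exact hw (Or.inr hfe)
  | imp a b =>
    simp only [Model.force] at hw
    push_neg at hw
    obtain ⟨w', hle, ha, hb⟩ := hw
    refine ⟨w', .form a, hle, Attacks.imp a b, ?_, ?_⟩
    · intro e he; cases he; exact ha
    · intro e hd hfe; cases hd; exact hb hfe

lemma oTrue_mono {M : Model} {d : Dialogue} {w w' : M.W} (hle : M.le w w')
    (hot : OTrue M d w) : OTrue M d w' :=
  fun j c hj hst => M.force_mono hle (hot j c hj hst)

lemma subS_extend {S : ℕ → Prop} {d : Dialogue} {m : Move} (hsub : SubS S d)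
    (hnew : ∀ e, m.statement = .form e → ∀ q ∈ e.atoms, S q) :
    SubS S (d.extend m) := by
  intro j c hst
  have hb := stmtAt_some_bound hst
  rw [extend_length] at hb
  rcases Nat.lt_or_ge j (d.moves.length + 1) with hj | hj
  · rw [stmtAt_extend_le (by omega)] at hst
    exact hsub j c hst
  · have hj' : j = d.moves.length + 1 := by omega
    subst hj'
    rw [stmtAt_extend_last] at hst
    exact hnew c (by injection hst)

lemma oTrue_extend {M : Model} {d : Dialogue} {w : M.W} {m : Move}
    (hot : OTrue M d w)
    (hnew : (d.moves.length + 1) % 2 = 1 →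
      ∀ e, m.statement = .form e → M.force w e) :
    OTrue M (d.extend m) w := by
  intro j c hj hst
  have hb := stmtAt_some_bound hst
  rw [extend_length] at hb
  rcases Nat.lt_or_ge j (d.moves.length + 1) with hjlt | hjge
  · rw [stmtAt_extend_le (by omega)] at hst
    exact hot j c hj hst
  · have hj' : j = d.moves.length + 1 := by omega
    subst hj'
    rw [stmtAt_extend_last] at hst
    exact hnew hj c (by injection hst)

lemma topPack_extend {M : Model} {d : Dialogue} {w : M.W} {m : Move}
    (hp : ParticleOK d)
    (hcase : (m.isAttack = true ∧ (d.moves.length + 1) % 2 = 0) ∨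
      (m.isAttack = false ∧ m.ref % 2 = 0))
    (htp : TopPack M d w) : TopPack M (d.extend m) w := by
  obtain ⟨r, hrodd, hratt, hrmax, hropen, hrtop⟩ := htp
  have hrb := isAttackPos_bound hratt
  refine ⟨r, hrodd, (isAttackPos_extend_le (by omega)).2 hratt, ?_, ?_, ?_⟩
  · intro r' hr'odd hr'att
    have hb := isAttackPos_bound hr'att
    rw [extend_length] at hb
    rcases Nat.lt_or_ge r' (d.moves.length + 1) with hlt | hge
    · exact hrmax r' hr'odd ((isAttackPos_extend_le (by omega)).1 hr'att)
    · exfalso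
      have hr' : r' = d.moves.length + 1 := by omega
      subst hr'
      rcases hcase with ⟨hA, hpar⟩ | ⟨hA, _⟩
      · omega
      · rcases hr'att with ⟨mj, hmj, hmjA⟩
        rw [moveAt_extend_last] at hmj
        injection hmj with hmj
        subst hmj
        rw [hA] at hmjA
        cases hmjA
  · intro j mj hmj hmjA hmjr
    have hb := moveAt_some_bounds hmj
    rw [extend_length] at hb
    rcases Nat.lt_or_ge j (d.moves.length + 1) with hlt | hge
    · rw [moveAt_extend_le (by omega)] at hmj
      exact hropen j mj hmj hmjA hmjr
    · have hj' : j = d.moves.length + 1 := by omega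
      subst hj'
      rw [moveAt_extend_last] at hmj
      injection hmj with hmj
      subst hmj
      rcases hcase with ⟨hA, _⟩ | ⟨_, hrefpar⟩
      · rw [hA] at hmjA; cases hmjA
      · omega
  · intro a χ e hma hχ hdd
    rw [moveAt_extend_le (by omega)] at hma
    have haref : a.ref < r := ref_lt hp hma
    rw [stmtAt_extend_le (by omega)] at hχ
    exact hrtop a χ e hma hχ hdd

lemma topPack_fresh {M : Model} {d : Dialogue} {w' : M.W} {m : Move} {ψ : Formula}
    (hp' : ParticleOK (d.extend m)) (hatt : m.isAttack = true)
    (href : m.ref = d.moves.length)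
    (hψ : d.stmtAt d.moves.length = some (.form ψ))
    (hopt : ∀ e, Defends ψ m.statement (.form e) → ¬ M.force w' e)
    (hodd : (d.moves.length + 1) % 2 = 1) :
    TopPack M (d.extend m) w' := by
  refine ⟨d.moves.length + 1, hodd, ⟨m, moveAt_extend_last d m, hatt⟩, ?_, ?_, ?_⟩
  · intro r' _ h'
    have hb := isAttackPos_bound h'
    rw [extend_length] at hb
    omega
  · intro j mj hmj hmjA hmjr
    have hb := moveAt_some_bounds hmj
    rw [extend_length] at hb
    have := ref_lt hp' hmj
    omega
  · intro a χ e hma hχ hdd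
    rw [moveAt_extend_last] at hma
    injection hma with hma
    subst hma
    rw [href, stmtAt_extend_le (le_refl _), hψ] at hχ
    injection hχ with hχ
    injection hχ with hχ
    subst hχ
    exact hopt e hdd
/-! ### O's countermodel play -/

lemma o_attack_step {S : ℕ → Prop} {M : Model} (hM : StableOn S M)
    {d : Dialogue} {w : M.W} {ψ : Formula}
    (hleg : Legal rulesetEprime d) (hsub : SubS S d) (hot : OTrue M d w)
    (hlen : d.moves.length % 2 = 0)
    (hψ : d.stmtAt d.moves.length = some (.form ψ)) (hfa : ¬ M.force w ψ)
    (ih : ∀ m, LegalExt rulesetEprime d m →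
      ∀ w', Inv S M (d.extend m) w' → False) : False := by
  classical
  by_cases hat : ∃ p, ψ = .atom p
  · obtain ⟨p, rfl⟩ := hat
    exact hfa (atom_force hM hleg hsub hot hlen hψ)
  · push_neg at hat
    obtain ⟨w', s, hle, hatk, hse, hdefe⟩ := attack_choice hat hfa
    have hmk : MoveOK d (d.moves.length + 1) (⟨s, true, d.moves.length⟩ : Move) := by
      refine ⟨by show d.moves.length < d.moves.length + 1; omega,
        by show d.moves.length % 2 ≠ (d.moves.length + 1) % 2; omega, ?_, ?_⟩
      · intro _
        exact ⟨ψ, hψ, hatk⟩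
      · intro hcon
        cases hcon
    have hlegal' := legal_extend_O hleg hlen rfl hmk
    refine ih ⟨s, true, d.moves.length⟩ hlegal' w'
      ⟨hlegal', ?_, ?_, Or.inl ⟨by simp; omega, ?_⟩⟩
    · refine subS_extend hsub ?_
      intro e he
      simp only at he
      subst he
      exact fun q hq => hsub _ _ hψ q (attacks_form_atoms hatk q hq)
    · refine oTrue_extend (oTrue_mono hle hot) ?_
      intro _ e he
      exact hse e he
    · exact topPack_fresh hlegal'.1 rfl rfl hψ hdefe (by omega)

lemma o_defend_step {S : ℕ → Prop} {M : Model}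
    {d : Dialogue} {w : M.W} {mm : Move} {ψ0 e : Formula}
    (hleg : Legal rulesetEprime d) (hsub : SubS S d) (hot : OTrue M d w)
    (hlen : d.moves.length % 2 = 0)
    (hmm : d.moveAt d.moves.length = some mm) (hmmAtt : mm.isAttack = true)
    (hψ0 : d.stmtAt mm.ref = some (.form ψ0))
    (hdd : Defends ψ0 mm.statement (.form e))
    (hfe : M.force w e) (htp : TopPack M d w)
    (ih : ∀ m, LegalExt rulesetEprime d m →
      ∀ w', Inv S M (d.extend m) w' → False) : False := by
  have hmk : MoveOK d (d.moves.length + 1) (⟨.form e, false, d.moves.length⟩ : Move) := by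
    refine ⟨by show d.moves.length < d.moves.length + 1; omega,
      by show d.moves.length % 2 ≠ (d.moves.length + 1) % 2; omega, ?_, ?_⟩
    · intro hcon
      cases hcon
    · intro _
      exact ⟨mm, ψ0, hmm, hmmAtt, hψ0, hdd⟩
  have hlegal' := legal_extend_O hleg hlen rfl hmk
  refine ih ⟨.form e, false, d.moves.length⟩ hlegal' w
    ⟨hlegal', ?_, ?_, Or.inl ⟨by simp; omega, ?_⟩⟩
  · refine subS_extend hsub ?_
    intro e' he'
    simp only at he'
    injection he' with he'
    subst he'
    exact fun q hq => hsub _ _ hψ0 q (defends_form_atoms hdd q hq)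
  · refine oTrue_extend hot ?_
    intro _ e' he'
    simp only at he'
    injection he' with he'
    subst he'
    exact hfe
  · exact topPack_extend hleg.1 (Or.inr ⟨rfl, by simpa using hlen⟩) htp

/-! ### Main induction on the winning strategy -/

lemma main_induction {S : ℕ → Prop} {M : Model} (hM : StableOn S M) :
    ∀ d, PWinningC rulesetEprime (fun _ _ => True) d →
      ∀ w, Inv S M d w → False := by
  intro d h
  induction h with
  | pMove d m hturn hm hC h ih =>
    intro w hInv
    obtain ⟨hleg, hsub, hot, hbr⟩ := hInv
    have hlen : d.moves.length % 2 = 1 := by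
      simp only [PTurn, nextPos] at hturn
      omega
    rcases hbr with ⟨_, htp⟩ | ⟨h0, _⟩ | ⟨h0, _⟩
    rotate_left
    · omega
    · omega
    have hmOK : MoveOK (d.extend m) (d.moves.length + 1) m :=
      particle_moveAt hm.1 (moveAt_extend_last d m)
    obtain ⟨href_lt, hpar, hattC, hdefC⟩ := hmOK
    have hrefodd : m.ref % 2 = 1 := by omega
    cases hA : m.isAttack with
    | true =>
      obtain ⟨ψ, hψ', hatk⟩ := hattC hA
      have hψd : d.stmtAt m.ref = some (.form ψ) := by
        rwa [stmtAt_extend_le (by omega)] at hψ'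
      refine ih w ⟨hm, ?_, ?_, Or.inr (Or.inr ⟨by simp; omega, ?_, ?_⟩)⟩
      · refine subS_extend hsub ?_
        intro e he
        rw [he] at hatk
        exact fun q hq => hsub _ _ hψd q (attacks_form_atoms hatk q hq)
      · exact oTrue_extend hot (fun hodd => by omega)
      · refine ⟨m, ?_, hA⟩
        rw [extend_length]
        exact moveAt_extend_last d m
      · exact topPack_extend hleg.1 (Or.inl ⟨hA, by omega⟩) htp
    | false =>
      obtain ⟨a, χ, hma', haAtt, haχ', hdd⟩ := hdefC hA
      have hmrefle : m.ref ≤ d.moves.length := by omega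
      have hma : d.moveAt m.ref = some a := by rwa [moveAt_extend_le hmrefle] at hma'
      have haref : a.ref < m.ref := ref_lt hleg.1 hma
      have haχ : d.stmtAt a.ref = some (.form χ) := by
        rwa [stmtAt_extend_le (by omega)] at haχ'
      obtain ⟨r, hrodd, hratt, hrmax, hropen, hrtop⟩ := htp
      have hrbound := isAttackPos_bound hratt
      have hmref_r : m.ref = r := by
        have hler : m.ref ≤ r := hrmax m.ref hrefodd ⟨a, hma, haAtt⟩
        rcases eq_or_lt_of_le hler with hEq | hlt
        · exact hEq
        exfalso
        have hD11 := hm.2.2.1 (d.moves.length + 1) m.ref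
          ⟨m, moveAt_extend_last d m, hA, rfl⟩
        refine hD11.2 ⟨r, hlt, by omega, by omega,
          (isAttackPos_extend_le (by omega)).2 hratt, ?_⟩
        rintro ⟨j, hj, mj, hmj, hmjA, hmjr⟩
        have hjle : j ≤ d.moves.length := by omega
        rw [moveAt_extend_le hjle] at hmj
        exact hropen j mj hmj hmjA hmjr
      obtain ⟨e, hse⟩ := defends_form hdd
      rw [hse] at hdd
      have hnfe : ¬ M.force w e := by
        refine hrtop a χ e ?_ haχ hdd
        rwa [hmref_r] at hma
      refine ih w ⟨hm, ?_, ?_, Or.inr (Or.inl ⟨by simp; omega, e, ?_, hnfe⟩)⟩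
      · refine subS_extend hsub ?_
        intro e' he'
        rw [hse] at he'
        injection he' with he'
        subst he'
        exact fun q hq => hsub _ _ haχ q (defends_form_atoms hdd q hq)
      · exact oTrue_extend hot (fun hodd => by omega)
      · rw [extend_length, stmtAt_extend_last, hse]
  | oMoves d hturn h ih =>
    intro w hInv
    obtain ⟨hleg, hsub, hot, hbr⟩ := hInv
    have hlen : d.moves.length % 2 = 0 := by
      simp only [PTurn, nextPos] at hturn
      omega
    rcases hbr with ⟨h1, _⟩ | ⟨_, ψ, hψ, hfa⟩ | ⟨_, ⟨mm, hmm, hmmAtt⟩, htp⟩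
    · omega
    · exact o_attack_step hM hleg hsub hot hlen hψ hfa (fun m hm => ih m hm)
    · have hmmOK := particle_moveAt hleg.1 hmm
      obtain ⟨hmref, hmpar, hattC, _⟩ := hmmOK
      obtain ⟨ψ0, hψ0, hatk⟩ := hattC hmmAtt
      have hodd0 : mm.ref % 2 = 1 := by omega
      have hfψ0 : M.force w ψ0 := hot mm.ref ψ0 hodd0 hψ0
      have hstmtlast : d.stmtAt d.moves.length = some mm.statement :=
        stmtAt_of_moveAt hmm
      generalize hstEq : mm.statement = st at hatk hstmtlast
      cases hatk with
      | andL a b =>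
        exact o_defend_step hleg hsub hot hlen hmm hmmAtt hψ0
          (by rw [hstEq]; exact Defends.andL a b)
          hfψ0.1 htp (fun m hm => ih m hm)
      | andR a b =>
        exact o_defend_step hleg hsub hot hlen hmm hmmAtt hψ0
          (by rw [hstEq]; exact Defends.andR a b)
          hfψ0.2 htp (fun m hm => ih m hm)
      | qmark a b =>
        have hfor : M.force w a ∨ M.force w b := hfψ0
        rcases hfor with hfa | hfb
        · exact o_defend_step hleg hsub hot hlen hmm hmmAtt hψ0
            (by rw [hstEq]; exact Defends.orL a b) hfa htp (fun m hm => ih m hm)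
        · exact o_defend_step hleg hsub hot hlen hmm hmmAtt hψ0
            (by rw [hstEq]; exact Defends.orR a b) hfb htp (fun m hm => ih m hm)
      | imp a b =>
        by_cases hfa : M.force w a
        · exact o_defend_step hleg hsub hot hlen hmm hmmAtt hψ0
            (by rw [hstEq]; exact Defends.imp a b) (hfψ0 w (M.refl w) hfa) htp
            (fun m hm => ih m hm)
        · exact o_attack_step hM hleg hsub hot hlen hstmtlast hfa
            (fun m hm => ih m hm)
      | neg a =>
        have hna : ¬ M.force w a := fun hfa => hfψ0 w (M.refl w) hfa
        exact o_attack_step hM hleg hsub hot hlen hstmtlast hna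
          (fun m hm => ih m hm)

/-- Soundness of E′-dialogues w.r.t. Kripke models stable on the atoms of φ. -/
lemma partA {φ : Formula} (h : valid rulesetEprime φ) :
    ∀ M : Model, StableOn (· ∈ φ.atoms) M → ∀ w, M.force w φ := by
  intro M hM w
  by_contra hw
  obtain ⟨hleg, hwin⟩ := h
  refine main_induction hM ⟨φ, []⟩ hwin w ⟨hleg, ?_, ?_, Or.inr (Or.inl ⟨rfl, φ, ?_, hw⟩)⟩
  · intro j c hst q hq
    have hb := stmtAt_some_bound hst
    simp at hb
    subst hb
    rw [stmtAt_zero] at hst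
    injection hst with hst
    injection hst with hst
    subst hst
    exact hq
  · intro j c hj hst
    have hb := stmtAt_some_bound hst
    simp at hb
    omega
  · exact stmtAt_zero _

/-- If φ is E′-valid, then there exist atoms p₁, …, pₙ occurring in φ such
that ((¬¬p₁ → p₁) ∧ … ∧ (¬¬pₙ → pₙ)) → φ is intuitionistically valid. -/
theorem Eprime_valid_reduces_to_IL (φ : Formula)
    (h : valid rulesetEprime φ) :
    ∃ (p : ℕ) (ps : List ℕ), (∀ q ∈ p :: ps, q ∈ φ.atoms) ∧
      IProv (.imp (stabConj p ps) φ) :=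
  final_plumbing (partA h)

end LorenzenDialogues
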